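/- Define f : ℝ → ℝ by f(x) = x for x > 1, f(x) = α_{n+1}x + β_{n+1} for α_{n+1} < x ≤ α_n (n ≥ 0), f(0) = β, and f(x) = f(−x) for x < 0, where α_n = 1/(n+1)!, β_0 = 0, β_{n+1} = Σ_{k=0}^{n} 1/(k!(k+2)!), and β = lim β_n. Then f is convex and continuous on ℝ. -/

import Mathlib

open Nat

/-- `α n = 1/(n+1)!`. -/
noncomputable def alph (n : ℕ) : ℝ := 1 / ((n + 1)! : ℝ)

/-- `β 0 = 0`, `β (n+1) = ∑_{k=0}^{n} 1/(k!(k+2)!)`. -/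
noncomputable def bet (n : ℕ) : ℝ := ∑ k ∈ Finset.range n, 1 / ((k ! : ℝ) * ((k + 2)! : ℝ))

/-- `β = lim β n = ∑_{k=0}^{∞} 1/(k!(k+2)!)`. -/
noncomputable def betLim : ℝ := ∑' k : ℕ, 1 / ((k ! : ℝ) * ((k + 2)! : ℝ))

lemma alph_pos (n : ℕ) : 0 < alph n := by
  unfold alph
  positivity

lemma alph_zero : alph 0 = 1 := by simp [alph]

lemma alph_anti : StrictAnti alph := by
  apply strictAnti_nat_of_succ_lt
  intro n
  unfold alph
  apply one_div_lt_one_div_of_lt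
  · positivity
  · exact_mod_cast Nat.factorial_lt (Nat.succ_pos _) |>.2 (Nat.lt_succ_self _)

lemma alph_le_one (n : ℕ) : alph n ≤ 1 := by
  rcases Nat.eq_zero_or_pos n with h | h
  · simp [h, alph_zero]
  · exact le_of_lt (alph_zero ▸ alph_anti h)

lemma key (n : ℕ) : (alph n - alph (n + 1)) * alph n = 1 / ((n ! : ℝ) * ((n + 2)! : ℝ)) := by
  have h0 : ((n)! : ℝ) ≠ 0 := by exact_mod_cast (Nat.factorial_ne_zero n)
  unfold alph
  rw [show n + 1 + 1 = n + 2 from rfl, Nat.factorial_succ (n+1), Nat.factorial_succ n]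
  push_cast
  field_simp
  ring

lemma bet_succ (n : ℕ) : bet (n + 1) = bet n + (alph n - alph (n + 1)) * alph n := by
  rw [key, bet, bet, Finset.sum_range_succ]

noncomputable def lfun (n : ℕ) (x : ℝ) : ℝ := alph n * x + bet n

lemma lfun_step (n : ℕ) (x : ℝ) :
    lfun (n + 1) x - lfun n x = (alph n - alph (n + 1)) * (alph n - x) := by
  simp only [lfun, bet_succ]
  ring

lemma summable_aux : Summable (fun k : ℕ => 1 / ((k ! : ℝ) * ((k + 2)! : ℝ))) := by
  have hs : Summable (fun n : ℕ => 1 / (n ! : ℝ)) := by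
    simpa using Real.summable_pow_div_factorial 1
  refine Summable.of_nonneg_of_le (fun k => by positivity) (fun k => ?_) hs
  apply one_div_le_one_div_of_le
  · exact_mod_cast Nat.factorial_pos k
  · have h2 : (1 : ℝ) ≤ ((k+2)! : ℝ) := by
      exact_mod_cast Nat.one_le_iff_ne_zero.2 (Nat.factorial_ne_zero _)
    nlinarith [(Nat.cast_pos (α := ℝ)).2 (Nat.factorial_pos k)]

lemma bet_mono : Monotone bet := by
  apply monotone_nat_of_le_succ
  intro n
  rw [bet_succ]
  nlinarith [alph_pos n, alph_pos (n+1), (alph_anti (Nat.lt_succ_self n)).le]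

lemma bet_tendsto : Filter.Tendsto bet Filter.atTop (nhds betLim) :=
  summable_aux.hasSum.tendsto_sum_nat

lemma bet_le_betLim (n : ℕ) : bet n ≤ betLim :=
  bet_mono.ge_of_tendsto bet_tendsto n

noncomputable def gfun (x : ℝ) : ℝ := ⨆ n, (alph n * |x| + bet n)

lemma g_bdd (x : ℝ) : BddAbove (Set.range fun n => alph n * |x| + bet n) := by
  refine ⟨|x| + betLim, ?_⟩
  rintro _ ⟨n, rfl⟩
  show alph n * |x| + bet n ≤ |x| + betLim
  have h1 := mul_le_mul_of_nonneg_right (alph_le_one n) (abs_nonneg x)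
  have := bet_le_betLim n
  linarith

lemma g_even (x : ℝ) : gfun (-x) = gfun x := by simp [gfun]

lemma ciSup_eq_of_max {u : ℕ → ℝ} (m : ℕ) (h : ∀ k, u k ≤ u m) : (⨆ n, u n) = u m :=
  le_antisymm (ciSup_le h) (le_ciSup ⟨u m, by rintro _ ⟨k, rfl⟩; exact h k⟩ m)

lemma g_eq_piece (n : ℕ) (x : ℝ) (hx1 : alph (n + 1) < x) (hx2 : x ≤ alph n) :
    gfun x = lfun (n + 1) x := by
  have hx0 : 0 < x := lt_trans (alph_pos _) hx1
  have habs : |x| = x := abs_of_pos hx0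
  have hmax : ∀ m, lfun m x ≤ lfun (n + 1) x := by
    have up : ∀ k, k ≤ n + 1 → lfun (n + 1 - k) x ≤ lfun (n + 1) x := by
      intro k
      induction k with
      | zero => simp
      | succ k ih =>
        intro hk
        have hk' : k ≤ n + 1 := Nat.le_of_succ_le hk
        refine le_trans ?_ (ih hk')
        have heq : n + 1 - (k + 1) + 1 = n + 1 - k := by omega
        have hle : x ≤ alph (n + 1 - (k + 1)) := by
          refine hx2.trans (alph_anti.antitone ?_)
          omega
        have hst := lfun_step (n + 1 - (k + 1)) x
        rw [heq] at hst
        have hAB : alph (n + 1 - k) ≤ alph (n + 1 - (k + 1)) := alph_anti.antitone (by omega)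
        nlinarith [mul_nonneg (sub_nonneg.2 hAB) (sub_nonneg.2 hle)]
    have down : ∀ k, lfun (n + 1 + k) x ≤ lfun (n + 1) x := by
      intro k
      induction k with
      | zero => simp
      | succ k ih =>
        refine le_trans ?_ ih
        have hlt : alph (n + 1 + k) ≤ alph (n + 1) := alph_anti.antitone (by omega)
        have := lfun_step (n + 1 + k) x
        have : lfun (n+1+k+1) x - lfun (n+1+k) x ≤ 0 := by
          rw [this]
          have h1 : alph (n+1+k) - alph (n+1+k+1) ≥ 0 := sub_nonneg.2 (alph_anti (Nat.lt_succ_self _)).le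
          have h2 : alph (n+1+k) - x ≤ 0 := by linarith
          nlinarith
        have heq : n + 1 + (k + 1) = n + 1 + k + 1 := by omega
        rw [heq]
        linarith
    intro m
    rcases le_or_gt m (n + 1) with h | h
    · have := up (n + 1 - m) (by omega)
      rwa [show n + 1 - (n + 1 - m) = m by omega] at this
    · have := down (m - (n + 1))
      rwa [show n + 1 + (m - (n + 1)) = m by omega] at this
  rw [gfun, habs]
  exact ciSup_eq_of_max (n + 1) hmax

lemma g_eq_id (x : ℝ) (hx : 1 < x) : gfun x = x := by
  have hx0 : 0 < x := lt_trans one_pos hx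
  have habs : |x| = x := abs_of_pos hx0
  have hmax : ∀ m, lfun m x ≤ lfun 0 x := by
    intro m
    induction m with
    | zero => exact le_refl _
    | succ m ih =>
      refine le_trans ?_ ih
      have hst := lfun_step m x
      have hA : 0 ≤ alph m - alph (m+1) := sub_nonneg.2 (alph_anti (Nat.lt_succ_self _)).le
      have hB : alph m - x ≤ 0 := by linarith [alph_le_one m]
      nlinarith [mul_nonpos_of_nonneg_of_nonpos hA hB]
  rw [gfun, habs]
  have h0 : (⨆ n, (alph n * x + bet n)) = lfun 0 x := ciSup_eq_of_max 0 hmax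
  rw [h0]
  simp [lfun, alph_zero, bet]

lemma g_zero : gfun 0 = betLim := by
  have : gfun 0 = ⨆ n, bet n := by simp [gfun]
  rw [this]
  have hb : BddAbove (Set.range bet) := ⟨betLim, by rintro _ ⟨n, rfl⟩; exact bet_le_betLim n⟩
  have := tendsto_atTop_ciSup bet_mono hb
  exact tendsto_nhds_unique this bet_tendsto

lemma g_convex : ConvexOn ℝ Set.univ gfun := by
  refine ⟨convex_univ, ?_⟩
  intro x _ y _ a b ha hb hab
  rw [gfun]
  apply ciSup_le
  intro n
  have h1 : |a • x + b • y| ≤ a * |x| + b * |y| := by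
    calc |a • x + b • y| ≤ |a • x| + |b • y| := abs_add_le _ _
    _ = a * |x| + b * |y| := by
        simp [smul_eq_mul, abs_mul, abs_of_nonneg ha, abs_of_nonneg hb]
  have h2 : alph n * |a • x + b • y| + bet n
      ≤ a * (alph n * |x| + bet n) + b * (alph n * |y| + bet n) := by
    have h3 := mul_le_mul_of_nonneg_left h1 (alph_pos n).le
    have hbet : a * bet n + b * bet n = bet n := by rw [← add_mul, hab, one_mul]
    nlinarith [h3, hbet]
  have gx : alph n * |x| + bet n ≤ gfun x := le_ciSup (g_bdd x) n
  have gy : alph n * |y| + bet n ≤ gfun y := le_ciSup (g_bdd y) n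
  simp only [smul_eq_mul]
  calc alph n * |a • x + b • y| + bet n
      ≤ a * (alph n * |x| + bet n) + b * (alph n * |y| + bet n) := h2
    _ ≤ a * gfun x + b * gfun y :=
        add_le_add (mul_le_mul_of_nonneg_left gx ha) (mul_le_mul_of_nonneg_left gy hb)

/-- The piecewise affine function of Example 3.5: `f(x) = x` for `x > 1`,
`f(x) = α_{n+1} x + β_{n+1}` on `(α_{n+1}, α_n]`, `f(0) = β`, `f(x) = f(-x)` for `x < 0`.
Then `f` is convex and continuous. -/
theorem stmt8 (f : ℝ → ℝ)
    (h1 : ∀ x : ℝ, 1 < x → f x = x)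
    (h2 : ∀ n : ℕ, ∀ x : ℝ, alph (n + 1) < x → x ≤ alph n → f x = alph (n + 1) * x + bet (n + 1))
    (h3 : f 0 = betLim)
    (h4 : ∀ x : ℝ, x < 0 → f x = f (-x)) :
    ConvexOn ℝ Set.univ f ∧ Continuous f := by
  have hpos : ∀ x : ℝ, 0 < x → f x = gfun x := by
    intro x hx
    rcases lt_or_ge 1 x with h | h
    · rw [h1 x h, g_eq_id x h]
    · have hex : ∃ n, alph n < x := by
        obtain ⟨n, hn⟩ := exists_nat_gt (1 / x)
        refine ⟨n, ?_⟩
        have hf : ((n : ℝ)) + 1 ≤ ((n + 1)! : ℝ) := by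
          exact_mod_cast Nat.self_le_factorial (n + 1)
        have h1x : 1 / x < ((n + 1)! : ℝ) := by linarith
        rw [alph, div_lt_iff₀ (by positivity)]
        rw [div_lt_iff₀ hx] at h1x
        nlinarith
      have hm0 : Nat.find hex ≠ 0 := by
        intro h0
        have hs := Nat.find_spec hex
        rw [h0, alph_zero] at hs
        linarith
      obtain ⟨k, hk⟩ : ∃ k, Nat.find hex = k + 1 := ⟨Nat.find hex - 1, by omega⟩
      have hspec : alph (k + 1) < x := hk ▸ Nat.find_spec hex
      have hmin : x ≤ alph k := le_of_not_gt (Nat.find_min hex (by omega))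
      rw [h2 k x hspec hmin, g_eq_piece k x hspec hmin, lfun]
  have hfg : f = gfun := by
    funext x
    rcases lt_trichotomy x 0 with h | h | h
    · rw [h4 x h, hpos (-x) (by linarith), g_even]
    · rw [h, h3, g_zero]
    · exact hpos x h
  rw [hfg]
  refine ⟨g_convex, ?_⟩
  exact continuousOn_univ.1 (g_convex.continuousOn isOpen_univ)
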